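/- arXiv:2009.02495 — 2 statements merged into one kernel-verified Lean document; each statement's English description precedes it below -/
import Mathlib

section
/- Let d ≥ 1, let μ : ℝ^d → [0,∞) be integrable, let λ, ρ, α ∈ (0,∞), and let ξ : [0,∞) → ℝ^d be measurable. Then λ ∫_0^∞ α e^{−α s} ( ∫_{ℝ^d} (1 − exp(−ρ ∫_0^s μ(x − ξ(u)) du)) dx ) ds ≤ λ ρ (∫_{ℝ^d} μ(x) dx) / α. -/
open MeasureTheory Real

theorem stmt1 (d : ℕ) (hd : 1 ≤ d) (μ : EuclideanSpace ℝ (Fin d) → ℝ)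
    (hμ0 : ∀ x, 0 ≤ μ x) (hμint : Integrable μ)
    (lam ρ α : ℝ) (hlam : 0 < lam) (hρ : 0 < ρ) (hα : 0 < α)
    (ξ : ℝ → EuclideanSpace ℝ (Fin d)) (hξ : Measurable ξ) :
    ENNReal.ofReal lam *
        ∫⁻ s in Set.Ici (0:ℝ), ENNReal.ofReal (α * Real.exp (-(α * s))) *
          ∫⁻ x, ENNReal.ofReal
            (1 - Real.exp (-(ρ * ∫ u in Set.Icc (0:ℝ) s, μ (x - ξ u)))) ≤
      ENNReal.ofReal (lam * ρ * (∫ x, μ x) / α) := by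
  set ι : ℝ := ∫ x, μ x with hιdef
  have hι0 : 0 ≤ ι := integral_nonneg hμ0
  have hμae : AEMeasurable μ (volume : Measure (EuclideanSpace ℝ (Fin d))) := hμint.aemeasurable
  have hlift : ENNReal.ofReal ι = ∫⁻ x, ENNReal.ofReal (μ x) :=
    ofReal_integral_eq_lintegral_ofReal hμint (Filter.Eventually.of_forall hμ0)
  -- Spatial bound: for each s ≥ 0 the inner lintegral is at most ρ * s * ι.
  have hspace : ∀ s ∈ Set.Ici (0:ℝ),
      (∫⁻ x, ENNReal.ofReal
          (1 - Real.exp (-(ρ * ∫ u in Set.Icc (0:ℝ) s, μ (x - ξ u))))) ≤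
        ENNReal.ofReal ρ * (ENNReal.ofReal s * ENNReal.ofReal ι) := by
    intro s hs
    set ν : Measure ℝ := volume.restrict (Set.Icc (0:ℝ) s) with hνdef
    -- pointwise: 1 - exp(-t) ≤ t
    have hpt : ∀ x : EuclideanSpace ℝ (Fin d),
        ENNReal.ofReal (1 - Real.exp (-(ρ * ∫ u in Set.Icc (0:ℝ) s, μ (x - ξ u)))) ≤
          ENNReal.ofReal ρ * ENNReal.ofReal (∫ u in Set.Icc (0:ℝ) s, μ (x - ξ u)) := by
      intro x
      set t : ℝ := ρ * ∫ u in Set.Icc (0:ℝ) s, μ (x - ξ u) with ht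
      have h1 : 1 - Real.exp (-t) ≤ t := by
        have := Real.add_one_le_exp (-t)
        linarith
      calc ENNReal.ofReal (1 - Real.exp (-t)) ≤ ENNReal.ofReal t :=
            ENNReal.ofReal_le_ofReal h1
        _ = ENNReal.ofReal ρ * ENNReal.ofReal (∫ u in Set.Icc (0:ℝ) s, μ (x - ξ u)) := by
            rw [ht, ENNReal.ofReal_mul hρ.le]
    -- Bochner integral ≤ lintegral, pointwise in x
    have hkey : ∀ x : EuclideanSpace ℝ (Fin d), ENNReal.ofReal (∫ u in Set.Icc (0:ℝ) s, μ (x - ξ u)) ≤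
        ∫⁻ u in Set.Icc (0:ℝ) s, ENNReal.ofReal (μ (x - ξ u)) := by
      intro x
      calc ENNReal.ofReal (∫ u in Set.Icc (0:ℝ) s, μ (x - ξ u))
          ≤ (‖∫ u in Set.Icc (0:ℝ) s, μ (x - ξ u)‖₊ : ENNReal) :=
            Real.ofReal_le_enorm _
        _ ≤ ∫⁻ u in Set.Icc (0:ℝ) s, (‖μ (x - ξ u)‖₊ : ENNReal) :=
            enorm_integral_le_lintegral_enorm _
        _ = ∫⁻ u in Set.Icc (0:ℝ) s, ENNReal.ofReal (μ (x - ξ u)) := by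
            refine lintegral_congr fun u => ?_
            exact Real.enorm_eq_ofReal (hμ0 _)
    -- a.e.-measurability of the kernel on the product space
    have hS : MeasurePreserving (fun p : ℝ × EuclideanSpace ℝ (Fin d) => (p.1, p.2 - ξ p.1))
        (ν.prod volume) (ν.prod volume) := by
      refine (MeasurePreserving.id ν).skew_product (g := fun u x => x - ξ u) ?_ ?_
      · exact measurable_snd.sub (hξ.comp measurable_fst)
      refine Filter.Eventually.of_forall fun u => ?_
      exact (measurePreserving_sub_right (volume : Measure (EuclideanSpace ℝ (Fin d))) (ξ u)).map_eq
    have hFae : AEMeasurable (fun p : ℝ × EuclideanSpace ℝ (Fin d) => ENNReal.ofReal (μ (p.2 - ξ p.1)))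
        (ν.prod volume) := by
      have h1 : AEMeasurable μ (Measure.map Prod.snd (ν.prod volume)) := by
        rw [Measure.map_snd_prod]
        exact hμae.smul_measure _
      have h2 : AEMeasurable (fun p : ℝ × EuclideanSpace ℝ (Fin d) => μ p.2) (ν.prod volume) :=
        h1.comp_measurable measurable_snd
      have h3 : AEMeasurable (fun p : ℝ × EuclideanSpace ℝ (Fin d) => μ (p.2 - ξ p.1)) (ν.prod volume) :=
        h2.comp_quasiMeasurePreserving hS.quasiMeasurePreserving
      exact ENNReal.measurable_ofReal.comp_aemeasurable h3
    have hGae : AEMeasurable (fun p : EuclideanSpace ℝ (Fin d) × ℝ => ENNReal.ofReal (μ (p.1 - ξ p.2)))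
        (volume.prod ν) := by
      have hswap : MeasurePreserving (Prod.swap : EuclideanSpace ℝ (Fin d) × ℝ → ℝ × EuclideanSpace ℝ (Fin d))
          (volume.prod ν) (ν.prod volume) := Measure.measurePreserving_swap
      exact hFae.comp_quasiMeasurePreserving hswap.quasiMeasurePreserving
    -- Tonelli and translation invariance
    have hswap : (∫⁻ x : EuclideanSpace ℝ (Fin d), ∫⁻ u in Set.Icc (0:ℝ) s, ENNReal.ofReal (μ (x - ξ u))) =
        ∫⁻ u in Set.Icc (0:ℝ) s, ∫⁻ x : EuclideanSpace ℝ (Fin d), ENNReal.ofReal (μ (x - ξ u)) :=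
      lintegral_lintegral_swap hGae
    have htrans : ∀ u : ℝ,
        (∫⁻ x : EuclideanSpace ℝ (Fin d), ENNReal.ofReal (μ (x - ξ u))) = ENNReal.ofReal ι := by
      intro u
      rw [lintegral_sub_right_eq_self (fun x => ENNReal.ofReal (μ x)) (ξ u), hlift]
    calc (∫⁻ x, ENNReal.ofReal
            (1 - Real.exp (-(ρ * ∫ u in Set.Icc (0:ℝ) s, μ (x - ξ u)))))
        ≤ ∫⁻ x, ENNReal.ofReal ρ *
            ∫⁻ u in Set.Icc (0:ℝ) s, ENNReal.ofReal (μ (x - ξ u)) := by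
          refine lintegral_mono fun x => ?_
          exact le_trans (hpt x) (mul_le_mul_right (hkey x) _)
      _ = ENNReal.ofReal ρ *
            ∫⁻ x, ∫⁻ u in Set.Icc (0:ℝ) s, ENNReal.ofReal (μ (x - ξ u)) := by
          rw [lintegral_const_mul' _ _ ENNReal.ofReal_ne_top]
      _ = ENNReal.ofReal ρ *
            ∫⁻ u in Set.Icc (0:ℝ) s, ∫⁻ x : EuclideanSpace ℝ (Fin d), ENNReal.ofReal (μ (x - ξ u)) := by
          rw [hswap]
      _ = ENNReal.ofReal ρ * (ENNReal.ofReal s * ENNReal.ofReal ι) := by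
          rw [lintegral_congr htrans, setLIntegral_const, Real.volume_Icc]
          rw [mul_comm (ENNReal.ofReal ι)]
          norm_num
  -- Outer integral computation
  have hJint : IntegrableOn (fun x : ℝ => α * Real.exp (-(α * x)) * x) (Set.Ioi 0) := by
    have h0 : IntegrableOn (fun x : ℝ => x ^ (1:ℝ) * Real.exp (-α * x ^ (1:ℝ)))
        (Set.Ioi (0:ℝ)) :=
      integrableOn_rpow_mul_exp_neg_mul_rpow (by norm_num) one_pos hα
    have h1 : IntegrableOn (fun x : ℝ => x * Real.exp (-(α * x))) (Set.Ioi 0) := by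
      refine h0.congr_fun (fun x hx => ?_) measurableSet_Ioi
      simp only [Real.rpow_one]
      ring_nf
    exact IntegrableOn.congr_fun (h1.const_mul α) (fun x _ => by ring) measurableSet_Ioi
  have hJval : (∫ x in Set.Ioi (0:ℝ), α * Real.exp (-(α * x)) * x) = 1 / α := by
    have h0 : (∫ t in Set.Ioi (0:ℝ), t ^ ((2:ℝ) - 1) * Real.exp (-(α * t)))
        = (1 / α) ^ (2:ℝ) * Real.Gamma 2 :=
      integral_rpow_mul_exp_neg_mul_Ioi (by norm_num) hα
    have h1 : (∫ t in Set.Ioi (0:ℝ), t * Real.exp (-(α * t))) = (1/α)^2 := by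
      rw [show ((2:ℝ) - 1) = (1:ℝ) by norm_num] at h0
      simp only [Real.rpow_one] at h0
      rw [h0, Real.Gamma_two, mul_one]
      rw [show ((1:ℝ)/α) ^ (2:ℝ) = (1/α)^(2:ℕ) by rw [← Real.rpow_natCast]; norm_num]
    have h2 : (∫ x in Set.Ioi (0:ℝ), α * Real.exp (-(α * x)) * x)
        = α * ∫ t in Set.Ioi (0:ℝ), t * Real.exp (-(α * t)) := by
      rw [← integral_const_mul]
      refine setIntegral_congr_fun measurableSet_Ioi fun x _ => ?_
      ring
    rw [h2, h1]
    field_simp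
  have hJ : (∫⁻ s in Set.Ici (0:ℝ), ENNReal.ofReal (α * Real.exp (-(α * s))) *
      ENNReal.ofReal s) = ENNReal.ofReal (1 / α) := by
    have e1 : (∫⁻ s in Set.Ici (0:ℝ), ENNReal.ofReal (α * Real.exp (-(α * s))) *
        ENNReal.ofReal s)
        = ∫⁻ s in Set.Ici (0:ℝ), ENNReal.ofReal (α * Real.exp (-(α * s)) * s) := by
      refine setLIntegral_congr_fun measurableSet_Ici
        (fun x hx => ?_)
      exact (ENNReal.ofReal_mul (by positivity)).symm
    have e2 : (∫⁻ s in Set.Ici (0:ℝ), ENNReal.ofReal (α * Real.exp (-(α * s)) * s))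
        = ∫⁻ s in Set.Ioi (0:ℝ), ENNReal.ofReal (α * Real.exp (-(α * s)) * s) :=
      (setLIntegral_congr (Ioi_ae_eq_Ici (μ := volume) (a := (0:ℝ)))).symm
    rw [e1, e2, ← ofReal_integral_eq_lintegral_ofReal hJint ?_, hJval]
    filter_upwards [self_mem_ae_restrict measurableSet_Ioi] with x hx
    have : (0:ℝ) < x := hx
    positivity
  -- Combine
  have hmain : (∫⁻ s in Set.Ici (0:ℝ), ENNReal.ofReal (α * Real.exp (-(α * s))) *
      ∫⁻ x, ENNReal.ofReal
        (1 - Real.exp (-(ρ * ∫ u in Set.Icc (0:ℝ) s, μ (x - ξ u)))))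
      ≤ ENNReal.ofReal ρ * ENNReal.ofReal ι * ENNReal.ofReal (1 / α) := by
    calc (∫⁻ s in Set.Ici (0:ℝ), ENNReal.ofReal (α * Real.exp (-(α * s))) *
        ∫⁻ x, ENNReal.ofReal
          (1 - Real.exp (-(ρ * ∫ u in Set.Icc (0:ℝ) s, μ (x - ξ u)))))
        ≤ ∫⁻ s in Set.Ici (0:ℝ), (ENNReal.ofReal ρ * ENNReal.ofReal ι) *
            (ENNReal.ofReal (α * Real.exp (-(α * s))) * ENNReal.ofReal s) := by
          refine setLIntegral_mono (by fun_prop) fun x hx => ?_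
          calc ENNReal.ofReal (α * Real.exp (-(α * x))) *
              ∫⁻ y, ENNReal.ofReal
                (1 - Real.exp (-(ρ * ∫ u in Set.Icc (0:ℝ) x, μ (y - ξ u))))
              ≤ ENNReal.ofReal (α * Real.exp (-(α * x))) *
                (ENNReal.ofReal ρ * (ENNReal.ofReal x * ENNReal.ofReal ι)) :=
                mul_le_mul_right (hspace x hx) _
            _ = (ENNReal.ofReal ρ * ENNReal.ofReal ι) *
                (ENNReal.ofReal (α * Real.exp (-(α * x))) * ENNReal.ofReal x) := by
                ring
      _ = (ENNReal.ofReal ρ * ENNReal.ofReal ι) *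
            ∫⁻ s in Set.Ici (0:ℝ), ENNReal.ofReal (α * Real.exp (-(α * s))) *
              ENNReal.ofReal s := by
          rw [lintegral_const_mul' _ _ (by finiteness)]
      _ = ENNReal.ofReal ρ * ENNReal.ofReal ι * ENNReal.ofReal (1 / α) := by
          rw [hJ]
  calc ENNReal.ofReal lam *
      ∫⁻ s in Set.Ici (0:ℝ), ENNReal.ofReal (α * Real.exp (-(α * s))) *
        ∫⁻ x, ENNReal.ofReal
          (1 - Real.exp (-(ρ * ∫ u in Set.Icc (0:ℝ) s, μ (x - ξ u))))
      ≤ ENNReal.ofReal lam *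
        (ENNReal.ofReal ρ * ENNReal.ofReal ι * ENNReal.ofReal (1 / α)) :=
        mul_le_mul_right hmain _
    _ = ENNReal.ofReal (lam * ρ * ι / α) := by
        rw [← ENNReal.ofReal_mul hρ.le, ← ENNReal.ofReal_mul (by positivity),
          ← ENNReal.ofReal_mul (by positivity)]
        congr 1
        field_simp
end

section
/- Let g : [0,1] → ℝ³ be a continuous path in three-dimensional Euclidean space, and let ℓ = ‖g(1) − g(0)‖ be the Euclidean distance between its endpoints. Then the Lebesgue measure of the unit sausage ⋃_{t ∈ [0,1]} (g(t) + B̄), where B̄ is the closed unit ball of ℝ³, is at least π ℓ + (4/3)π. -/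
open MeasureTheory Set Metric
open scoped RealInnerProductSpace

namespace Stmt8Aux

noncomputable section

local notation "E3" => EuclideanSpace ℝ (Fin 3)

lemma sausage_isCompact (c : ℝ → E3) (hc : ContinuousOn c (Set.Icc 0 1)) :
    IsCompact (⋃ t ∈ Set.Icc (0:ℝ) 1, Metric.closedBall (c t) 1) := by
  have h : (⋃ t ∈ Set.Icc (0:ℝ) 1, Metric.closedBall (c t) 1) =
      (fun p : ℝ × E3 => c p.1 + p.2) '' (Set.Icc 0 1 ×ˢ Metric.closedBall 0 1) := by
    ext x
    simp only [Set.mem_iUnion, Set.mem_image, Set.mem_prod, Metric.mem_closedBall, Prod.exists,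
      exists_prop]
    constructor
    · rintro ⟨t, ht, hx⟩
      exact ⟨t, x - c t, ⟨ht, by simpa [dist_eq_norm] using hx⟩, by abel⟩
    · rintro ⟨t, y, ⟨ht, hy⟩, rfl⟩
      exact ⟨t, ht, by simpa [dist_eq_norm] using hy⟩
  rw [h]
  exact (isCompact_Icc.prod (isCompact_closedBall 0 1)).image_of_continuousOn
    ((hc.comp continuous_fst.continuousOn (fun p hp => hp.1)).add continuous_snd.continuousOn)

lemma key (c : ℝ → E3) (hc : ContinuousOn c (Set.Icc 0 1))
    (ℓ : ℝ) (hℓ : 0 ≤ ℓ) (h0 : c 0 0 = 0) (h1 : c 1 0 = ℓ) :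
    ENNReal.ofReal (Real.pi * ℓ + (4 / 3) * Real.pi) ≤
      volume (⋃ t ∈ Set.Icc (0:ℝ) 1, Metric.closedBall (c t) 1) := by
  set S := ⋃ t ∈ Set.Icc (0:ℝ) 1, Metric.closedBall (c t) 1 with hSdef
  have hSc : IsCompact S := sausage_isCompact c hc
  have hSm : MeasurableSet S := hSc.isClosed.measurableSet
  set e1 := (MeasurableEquiv.toLp 2 (Fin 3 → ℝ)).symm with he1
  set e2 := MeasurableEquiv.piFinSuccAbove (fun _ : Fin 3 => ℝ) 0 with he2
  set A : Set (ℝ × (Fin 2 → ℝ)) := e2.symm ⁻¹' (e1.symm ⁻¹' S) with hAdef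
  have hBm : MeasurableSet (e1.symm ⁻¹' S) := hSm.preimage e1.symm.measurable
  have hAm : MeasurableSet A := hBm.preimage e2.symm.measurable
  -- volume of S equals the product-measure volume of A
  have hvol : volume S = (volume : Measure ℝ).prod (volume : Measure (Fin 2 → ℝ)) A := by
    have hv1 : (volume : Measure (Fin 3 → ℝ)) (e1.symm ⁻¹' S) = volume S :=
      MeasurePreserving.measure_preimage
        (MeasurePreserving.symm _ (EuclideanSpace.volume_preserving_symm_measurableEquiv_toLp (Fin 3)))
        hSm.nullMeasurableSet
    have hmp := MeasurePreserving.symm _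
      (measurePreserving_piFinSuccAbove (fun _ : Fin 3 => (volume : Measure ℝ)) 0)
    have hv2 := hmp.measure_preimage (s := e1.symm ⁻¹' S) (by
      rw [← volume_pi]
      exact hBm.nullMeasurableSet)
    rw [← volume_pi, ← volume_pi] at hv2
    calc volume S = volume (e1.symm ⁻¹' S) := hv1.symm
      _ = (volume.prod volume) A := hv2.symm
  -- slice lower bound
  have keyslice : ∀ s : ℝ, ∀ t ∈ Set.Icc (0:ℝ) 1, ∀ r : ℝ, 0 ≤ r →
      (s - c t 0) ^ 2 + r ^ 2 ≤ 1 →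
      ENNReal.ofReal (Real.pi * r ^ 2) ≤ volume (Prod.mk s ⁻¹' A) := by
    intro s t ht r hr hle
    set q : EuclideanSpace ℝ (Fin 2) := WithLp.toLp 2 (fun j : Fin 2 => c t j.succ : Fin 2 → ℝ) with hq
    have hsub : ((MeasurableEquiv.toLp 2 (Fin 2 → ℝ)).symm).symm ⁻¹' Metric.closedBall q r ⊆
        Prod.mk s ⁻¹' A := by
      intro y hy
      have hy' : dist (((MeasurableEquiv.toLp 2 (Fin 2 → ℝ)).symm).symm y) q ≤ r := hy
      have hsum2 : (∑ j : Fin 2, (y j - q j) ^ 2) ≤ r ^ 2 := by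
        have hdq : dist (((MeasurableEquiv.toLp 2 (Fin 2 → ℝ)).symm).symm y) q
            = Real.sqrt (∑ j : Fin 2, (y j - q j) ^ 2) := by
          rw [EuclideanSpace.dist_eq]
          congr 1
          refine Finset.sum_congr rfl fun j _ => ?_
          simp [MeasurableEquiv.coe_toLp, MeasurableEquiv.coe_toLp_symm, Real.dist_eq, sq_abs]
        have hnn : (0:ℝ) ≤ ∑ j : Fin 2, (y j - q j) ^ 2 :=
          Finset.sum_nonneg fun _ _ => sq_nonneg _
        rw [hdq] at hy'
        calc (∑ j : Fin 2, (y j - q j) ^ 2)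
            = Real.sqrt (∑ j : Fin 2, (y j - q j) ^ 2) ^ 2 := (Real.sq_sqrt hnn).symm
          _ ≤ r ^ 2 := by
              have := pow_le_pow_left₀ (Real.sqrt_nonneg _) hy' 2
              simpa using this
      -- show the point is in A
      show e1.symm (e2.symm (s, y)) ∈ S
      have hx : dist (e1.symm (e2.symm (s, y))) (c t) ≤ 1 := by
        rw [EuclideanSpace.dist_eq]
        have hcoord0 : e1.symm (e2.symm (s, y)) 0 = s := by
          rw [he1, he2]
          simp [MeasurableEquiv.coe_toLp, MeasurableEquiv.coe_toLp_symm, MeasurableEquiv.piFinSuccAbove_symm_apply]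
        have hcoordsucc : ∀ j : Fin 2, e1.symm (e2.symm (s, y)) j.succ = y j := by
          intro j
          have h := Fin.insertNth_apply_succAbove (α := fun _ : Fin 3 => ℝ) (i := (0 : Fin 3))
            (x := s) (p := y) j
          rw [Fin.succAbove_zero] at h
          rw [he1, he2]
          simpa [MeasurableEquiv.coe_toLp, MeasurableEquiv.coe_toLp_symm,
            MeasurableEquiv.piFinSuccAbove_symm_apply] using h
        have hsum : (∑ i : Fin 3, dist (e1.symm (e2.symm (s, y)) i) (c t i) ^ 2)
            = (s - c t 0) ^ 2 + ∑ j : Fin 2, (y j - q j) ^ 2 := by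
          rw [Fin.sum_univ_succ]
          congr 1
          · rw [hcoord0, Real.dist_eq, sq_abs]
          · refine Finset.sum_congr rfl fun j _ => ?_
            rw [hcoordsucc j, Real.dist_eq, sq_abs]
        rw [hsum]
        calc Real.sqrt ((s - c t 0) ^ 2 + ∑ j : Fin 2, (y j - q j) ^ 2)
            ≤ Real.sqrt 1 := Real.sqrt_le_sqrt (by linarith)
          _ = 1 := Real.sqrt_one
      exact Set.mem_biUnion ht hx
    have hballvol : volume (Metric.closedBall q r) = ENNReal.ofReal (Real.pi * r ^ 2) := by
      rw [EuclideanSpace.volume_closedBall]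
      simp only [Fintype.card_fin, Nat.cast_ofNat]
      have harg : ((2:ℝ) / 2 + 1) = 2 := by norm_num
      rw [harg, Real.Gamma_two, Real.sq_sqrt Real.pi_nonneg, div_one,
        ← ENNReal.ofReal_pow hr, ← ENNReal.ofReal_mul (by positivity)]
      congr 1
      ring
    calc ENNReal.ofReal (Real.pi * r ^ 2)
        = volume (Metric.closedBall q r) := hballvol.symm
      _ = volume (((MeasurableEquiv.toLp 2 (Fin 2 → ℝ)).symm).symm ⁻¹' Metric.closedBall q r) :=
          (MeasurePreserving.measure_preimage
            (MeasurePreserving.symm _ (EuclideanSpace.volume_preserving_symm_measurableEquiv_toLp (Fin 2)))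
            measurableSet_closedBall.nullMeasurableSet).symm
      _ ≤ volume (Prod.mk s ⁻¹' A) := measure_mono hsub
  -- intermediate value theorem for the first coordinate
  have hcont0 : ContinuousOn (fun t => c t 0) (Set.Icc (0:ℝ) 1) :=
    (EuclideanSpace.proj (0 : Fin 3)).continuous.comp_continuousOn hc
  have hIVT : ∀ x : ℝ, 0 ≤ x → x ≤ ℓ → ∃ t ∈ Set.Icc (0:ℝ) 1, c t 0 = x := by
    intro x hx hx'
    have hmem : x ∈ Set.Icc ((fun t => c t 0) 0) ((fun t => c t 0) 1) := by
      simp only [h0, h1]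
      exact ⟨hx, hx'⟩
    obtain ⟨t, ht, ht'⟩ := intermediate_value_Icc (by norm_num : (0:ℝ) ≤ 1) hcont0 hmem
    exact ⟨t, ht, ht'⟩
  -- the slice volume function
  set f : ℝ → ENNReal := fun s => volume (Prod.mk s ⁻¹' A) with hf
  have hfm : Measurable f := measurable_measure_prodMk_left hAm
  -- bounds on the three regions
  have hb1 : ∀ s ∈ Set.Ioc (-1:ℝ) 0, ENNReal.ofReal (Real.pi * (1 - s ^ 2)) ≤ f s := by
    intro s hs
    have h1s : 0 ≤ 1 - s ^ 2 := by nlinarith [hs.1, hs.2]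
    have := keyslice s 0 (by constructor <;> norm_num) (Real.sqrt (1 - s ^ 2))
      (Real.sqrt_nonneg _) (by rw [Real.sq_sqrt h1s, h0]; ring_nf; exact le_refl 1)
    simpa [Real.sq_sqrt h1s] using this
  have hb2 : ∀ s ∈ Set.Ioc (0:ℝ) ℓ, ENNReal.ofReal Real.pi ≤ f s := by
    intro s hs
    obtain ⟨t, ht, htc⟩ := hIVT s hs.1.le hs.2
    have := keyslice s t ht 1 (by norm_num) (by rw [htc]; norm_num)
    simpa using this
  have hb3 : ∀ s ∈ Set.Ioc ℓ (ℓ + 1), ENNReal.ofReal (Real.pi * (1 - (s - ℓ) ^ 2)) ≤ f s := by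
    intro s hs
    have h1s : 0 ≤ 1 - (s - ℓ) ^ 2 := by nlinarith [hs.1, hs.2]
    have := keyslice s 1 (by constructor <;> norm_num) (Real.sqrt (1 - (s - ℓ) ^ 2))
      (Real.sqrt_nonneg _) (by rw [Real.sq_sqrt h1s, h1]; ring_nf; exact le_refl 1)
    simpa [Real.sq_sqrt h1s] using this
  -- integral computations for the caps
  have cap_int : ∀ a : ℝ, ∫⁻ s in Set.Ioc a (a + 1),
      ENNReal.ofReal (Real.pi * (1 - (s - a) ^ 2)) = ENNReal.ofReal (2 / 3 * Real.pi) := by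
    intro a
    rw [← ofReal_integral_eq_lintegral_ofReal]
    · congr 1
      rw [← intervalIntegral.integral_of_le (by linarith : a ≤ a + 1)]
      have hcomp := intervalIntegral.integral_comp_sub_right
        (a := a) (b := a + 1) (fun u => Real.pi * (1 - u ^ 2)) a
      rw [hcomp]
      have ha : a - a = 0 := by ring
      have hb : a + 1 - a = 1 := by ring
      rw [ha, hb]
      rw [intervalIntegral.integral_const_mul,
        intervalIntegral.integral_sub intervalIntegrable_const
          (intervalIntegral.intervalIntegrable_pow 2),
        intervalIntegral.integral_const, integral_pow]
      norm_num
      ring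
    · exact Continuous.integrableOn_Ioc
        (continuous_const.mul (continuous_const.sub ((continuous_id.sub continuous_const).pow 2)))
    · filter_upwards [ae_restrict_mem measurableSet_Ioc] with s hs
      have h1 : (s - a) ^ 2 ≤ 1 := by nlinarith [hs.1, hs.2]
      have h2 : (0:ℝ) ≤ 1 - (s - a) ^ 2 := by linarith
      exact mul_nonneg Real.pi_nonneg h2
  have intL : ∫⁻ s in Set.Ioc (-1:ℝ) 0,
      ENNReal.ofReal (Real.pi * (1 - s ^ 2)) = ENNReal.ofReal (2 / 3 * Real.pi) := by
    rw [← ofReal_integral_eq_lintegral_ofReal]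
    · congr 1
      rw [← intervalIntegral.integral_of_le (by norm_num : (-1:ℝ) ≤ 0)]
      rw [intervalIntegral.integral_const_mul,
        intervalIntegral.integral_sub intervalIntegrable_const
          (intervalIntegral.intervalIntegrable_pow 2),
        intervalIntegral.integral_const, integral_pow]
      norm_num
      ring
    · exact Continuous.integrableOn_Ioc
        (continuous_const.mul (continuous_const.sub (continuous_id.pow 2)))
    · filter_upwards [ae_restrict_mem measurableSet_Ioc] with s hs
      have h1 : s ^ 2 ≤ 1 := by nlinarith [hs.1, hs.2]
      have h2 : (0:ℝ) ≤ 1 - s ^ 2 := by linarith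
      exact mul_nonneg Real.pi_nonneg h2
  have intR : ∫⁻ s in Set.Ioc ℓ (ℓ + 1),
      ENNReal.ofReal (Real.pi * (1 - (s - ℓ) ^ 2)) = ENNReal.ofReal (2 / 3 * Real.pi) :=
    cap_int ℓ
  have intM : ∫⁻ _s in Set.Ioc (0:ℝ) ℓ, ENNReal.ofReal Real.pi
      = ENNReal.ofReal (Real.pi * ℓ) := by
    rw [setLIntegral_const, Real.volume_Ioc, sub_zero, ← ENNReal.ofReal_mul Real.pi_nonneg]
  -- combine
  have lower1 : ENNReal.ofReal (2 / 3 * Real.pi) ≤ ∫⁻ s in Set.Ioc (-1:ℝ) 0, f s := by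
    rw [← intL]; exact setLIntegral_mono hfm hb1
  have lower2 : ENNReal.ofReal (Real.pi * ℓ) ≤ ∫⁻ s in Set.Ioc (0:ℝ) ℓ, f s := by
    rw [← intM]; exact setLIntegral_mono hfm hb2
  have lower3 : ENNReal.ofReal (2 / 3 * Real.pi) ≤ ∫⁻ s in Set.Ioc ℓ (ℓ + 1), f s := by
    rw [← intR]; exact setLIntegral_mono hfm hb3
  have split : ∫⁻ s in Set.Ioc (-1:ℝ) (ℓ + 1), f s
      = (∫⁻ s in Set.Ioc (-1:ℝ) 0, f s) + (∫⁻ s in Set.Ioc (0:ℝ) ℓ, f s)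
        + ∫⁻ s in Set.Ioc ℓ (ℓ + 1), f s := by
    rw [← Set.Ioc_union_Ioc_eq_Ioc (by linarith : (-1:ℝ) ≤ ℓ) (by linarith : ℓ ≤ ℓ + 1),
      lintegral_union measurableSet_Ioc (Set.Ioc_disjoint_Ioc_of_le le_rfl),
      ← Set.Ioc_union_Ioc_eq_Ioc (by norm_num : (-1:ℝ) ≤ 0) hℓ,
      lintegral_union measurableSet_Ioc (Set.Ioc_disjoint_Ioc_of_le le_rfl)]
  calc ENNReal.ofReal (Real.pi * ℓ + (4 / 3) * Real.pi)
      = ENNReal.ofReal (2 / 3 * Real.pi) + ENNReal.ofReal (Real.pi * ℓ)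
        + ENNReal.ofReal (2 / 3 * Real.pi) := by
        rw [← ENNReal.ofReal_add (by positivity) (by positivity),
          ← ENNReal.ofReal_add (by positivity) (by positivity)]
        congr 1
        ring
    _ ≤ (∫⁻ s in Set.Ioc (-1:ℝ) 0, f s) + (∫⁻ s in Set.Ioc (0:ℝ) ℓ, f s)
        + ∫⁻ s in Set.Ioc ℓ (ℓ + 1), f s := by
        exact add_le_add (add_le_add lower1 lower2) lower3
    _ = ∫⁻ s in Set.Ioc (-1:ℝ) (ℓ + 1), f s := split.symm
    _ ≤ ∫⁻ s, f s := setLIntegral_le_lintegral _ _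
    _ = (volume : Measure ℝ).prod (volume : Measure (Fin 2 → ℝ)) A :=
        (Measure.prod_apply hAm).symm
    _ = volume S := hvol.symm

end

end Stmt8Aux

theorem stmt8 (g : ℝ → EuclideanSpace ℝ (Fin 3))
    (hg : ContinuousOn g (Set.Icc 0 1)) :
    ENNReal.ofReal (Real.pi * ‖g 1 - g 0‖ + (4 / 3) * Real.pi) ≤
      volume (⋃ t ∈ Set.Icc (0:ℝ) 1, Metric.closedBall (g t) 1) := by
  classical
  set v : EuclideanSpace ℝ (Fin 3) := g 1 - g 0 with hv
  set ℓ : ℝ := ‖v‖ with hℓdef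
  have hℓ : 0 ≤ ℓ := norm_nonneg _
  set e0 : EuclideanSpace ℝ (Fin 3) := EuclideanSpace.single 0 1 with he0
  have he0n : ‖e0‖ = 1 := by rw [he0, EuclideanSpace.norm_single]; norm_num
  set u : EuclideanSpace ℝ (Fin 3) := if ℓ = 0 then e0 else ℓ⁻¹ • v with hu
  have hun : ‖u‖ = 1 := by
    rw [hu]
    by_cases h : ℓ = 0
    · rw [if_pos h]; exact he0n
    · rw [if_neg h, norm_smul, norm_inv, Real.norm_eq_abs, abs_of_nonneg hℓ, ← hℓdef]
      exact inv_mul_cancel₀ h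
  have hinner : ⟪v, u⟫ = ℓ := by
    rw [hu]
    by_cases h : ℓ = 0
    · rw [if_pos h]
      have hv0 : v = 0 := by
        rw [hℓdef] at h
        exact norm_eq_zero.mp h
      rw [hv0, inner_zero_left, h]
    · rw [if_neg h, real_inner_smul_right, real_inner_self_eq_norm_sq, ← hℓdef, sq,
        ← mul_assoc, inv_mul_cancel₀ h, one_mul]
  set T : EuclideanSpace ℝ (Fin 3) ≃ₗᵢ[ℝ] EuclideanSpace ℝ (Fin 3) :=
    Submodule.reflection (Submodule.span ℝ {u - e0})ᗮ with hT
  have hTu : T u = e0 := Submodule.reflection_sub (by rw [hun, he0n])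
  set c : ℝ → EuclideanSpace ℝ (Fin 3) := fun t => T (g t - g 0) with hcdef
  have hc : ContinuousOn c (Set.Icc 0 1) :=
    T.continuous.comp_continuousOn (hg.sub continuousOn_const)
  have hc0 : c 0 0 = 0 := by
    have : c 0 = 0 := by rw [hcdef]; simp
    rw [this]; rfl
  have hc1 : c 1 0 = ℓ := by
    have hinn : ⟪c 1, e0⟫ = ℓ := by
      show ⟪T (g 1 - g 0), e0⟫ = ℓ
      rw [← hTu, LinearIsometryEquiv.inner_map_map, ← hv]
      exact hinner
    rw [he0, EuclideanSpace.inner_single_right] at hinn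
    simpa using hinn
  set S' := ⋃ t ∈ Set.Icc (0:ℝ) 1, Metric.closedBall (c t) 1 with hS'
  set F : EuclideanSpace ℝ (Fin 3) → EuclideanSpace ℝ (Fin 3) := fun x => T (x - g 0) with hF
  have hdist : ∀ x t, dist (F x) (c t) = dist x (g t) := by
    intro x t
    show dist (T (x - g 0)) (T (g t - g 0)) = dist x (g t)
    rw [T.dist_map, dist_sub_right]
  have hFS : (⋃ t ∈ Set.Icc (0:ℝ) 1, Metric.closedBall (g t) 1) = F ⁻¹' S' := by
    ext x
    constructor
    · intro hx
      obtain ⟨t, ht, hx'⟩ := Set.mem_iUnion₂.1 hx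
      refine Set.mem_preimage.2 (Set.mem_iUnion₂.2 ⟨t, ht, ?_⟩)
      rw [Metric.mem_closedBall] at hx' ⊢
      rw [hdist]
      exact hx'
    · intro hx
      obtain ⟨t, ht, hx'⟩ := Set.mem_iUnion₂.1 (Set.mem_preimage.1 hx)
      refine Set.mem_iUnion₂.2 ⟨t, ht, ?_⟩
      rw [Metric.mem_closedBall] at hx' ⊢
      rw [← hdist x t]
      exact hx'
  have hFmp : MeasurePreserving F volume volume :=
    T.measurePreserving.comp (measurePreserving_sub_right volume (g 0))
  have hS'm : NullMeasurableSet S' (volume : Measure (EuclideanSpace ℝ (Fin 3))) :=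
    (Stmt8Aux.sausage_isCompact c hc).isClosed.measurableSet.nullMeasurableSet
  rw [hFS, hFmp.measure_preimage hS'm]
  exact Stmt8Aux.key c hc ℓ hℓ hc0 hc1
end
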